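/- Let u ≠ v be elements of 𝒱 whose columns in N have equal (positive) sum d. Then U(N̂ e_u) = N̂ e_v if and only if 𝒱 has exactly two elements; that is, perfect state transfer at time 1 occurs precisely when 𝒱 = {u, v}. -/

import Mathlib

open Matrix

lemma aux_diag {A V : Type*} [Fintype A]
    (X : Matrix A V ℝ) (h01 : ∀ a w, X a w = 0 ∨ X a w = 1) (w : V) :
    (Xᵀ * X) w w = ∑ a, X a w := by
  rw [Matrix.mul_apply]
  apply Finset.sum_congr rfl
  intro a _
  rcases h01 a w with h | h <;> simp [h, Matrix.transpose_apply]

lemma aux_hat_orth {A V : Type*} [Fintype A] [Fintype V] [DecidableEq V]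
    (X : Matrix A V ℝ) (h01 : ∀ a w, X a w = 0 ∨ X a w = 1)
    (hrow : ∀ a, ∃! w, X a w = 1) (hcol : ∀ w, 0 < ∑ a, X a w) :
    (X * Matrix.diagonal (fun w => (Real.sqrt ((Xᵀ*X) w w))⁻¹))ᵀ *
      (X * Matrix.diagonal (fun w => (Real.sqrt ((Xᵀ*X) w w))⁻¹)) = 1 := by
  ext w w'
  rw [Matrix.mul_apply]
  simp only [Matrix.transpose_apply, Matrix.mul_diagonal, aux_diag X h01]
  by_cases h : w = w'
  · subst h
    have hpos := hcol w
    have hsq : Real.sqrt (∑ a, X a w) * Real.sqrt (∑ a, X a w) = ∑ a, X a w :=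
      Real.mul_self_sqrt hpos.le
    have hsqrt_ne : Real.sqrt (∑ a, X a w) ≠ 0 := by positivity
    have : ∀ a, X a w * (Real.sqrt (∑ a, X a w))⁻¹ *
        (X a w * (Real.sqrt (∑ a, X a w))⁻¹) =
        (X a w) * ((Real.sqrt (∑ a, X a w))⁻¹ * (Real.sqrt (∑ a, X a w))⁻¹) := by
      intro a
      rcases h01 a w with h | h <;> simp [h]
    rw [Finset.sum_congr rfl (fun a _ => this a), ← Finset.sum_mul]
    rw [Matrix.one_apply_eq, ← mul_inv, hsq, mul_inv_cancel₀ (ne_of_gt hpos)]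
  · rw [Matrix.one_apply_ne h]
    apply Finset.sum_eq_zero
    intro a _
    have : X a w = 0 ∨ X a w' = 0 := by
      by_contra hc
      push_neg at hc
      obtain ⟨w0, _, huniq⟩ := hrow a
      have h1 : X a w = 1 := (h01 a w).resolve_left hc.1
      have h2 : X a w' = 1 := (h01 a w').resolve_left hc.2
      exact h ((huniq w h1).trans (huniq w' h2).symm)
    rcases this with h | h <;> simp [h]

lemma aux_rowsum {A V : Type*} [Fintype V]
    (X : Matrix A V ℝ) (h01 : ∀ a w, X a w = 0 ∨ X a w = 1)
    (hrow : ∀ a, ∃! w, X a w = 1) (a : A) : ∑ w, X a w = 1 := by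
  obtain ⟨w0, hw0, huniq⟩ := hrow a
  rw [Finset.sum_eq_single w0]
  · exact hw0
  · intro w _ hne
    rcases h01 a w with h | h
    · exact h
    · exact absurd (huniq w h) hne
  · simp

lemma aux_hat_one {A V : Type*} [Fintype A] [Fintype V] [DecidableEq V]
    (X : Matrix A V ℝ) (h01 : ∀ a w, X a w = 0 ∨ X a w = 1)
    (hrow : ∀ a, ∃! w, X a w = 1) (hcol : ∀ w, 0 < ∑ a, X a w) :
    ((X * Matrix.diagonal (fun w => (Real.sqrt ((Xᵀ*X) w w))⁻¹)) *
      (X * Matrix.diagonal (fun w => (Real.sqrt ((Xᵀ*X) w w))⁻¹))ᵀ) *ᵥ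
      (fun _ => (1:ℝ)) = fun _ => 1 := by
  set Y := X * Matrix.diagonal (fun w => (Real.sqrt ((Xᵀ*X) w w))⁻¹) with hYdef
  have hY : ∀ a w, Y a w = X a w * (Real.sqrt ((Xᵀ*X) w w))⁻¹ := by
    intro a w
    rw [hYdef, Matrix.mul_diagonal]
  funext a
  have expand : ((Y * Yᵀ) *ᵥ fun _ => (1:ℝ)) a =
      ∑ w, ∑ b : A, Y a w * Y b w := by
    simp only [Matrix.mulVec, dotProduct, Matrix.mul_apply, Matrix.transpose_apply, mul_one]
    rw [Finset.sum_comm]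
  rw [expand]
  have key : ∀ w, ∑ b : A, Y a w * Y b w = X a w := by
    intro w
    have hs : (Xᵀ*X) w w = ∑ b, X b w := by
      rw [Matrix.mul_apply]
      apply Finset.sum_congr rfl
      intro b _
      rcases h01 b w with h | h <;> simp [h, Matrix.transpose_apply]
    have hpos := hcol w
    have hne : (∑ b : A, X b w) ≠ 0 := ne_of_gt hpos
    have hsq : Real.sqrt (∑ b, X b w) * Real.sqrt (∑ b, X b w) = ∑ b, X b w :=
      Real.mul_self_sqrt hpos.le
    have hgg : (Real.sqrt (∑ b, X b w))⁻¹ * (Real.sqrt (∑ b, X b w))⁻¹ =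
        (∑ b : A, X b w)⁻¹ := by rw [← mul_inv, hsq]
    simp only [hY, hs]
    rw [← Finset.mul_sum, ← Finset.sum_mul]
    have : X a w * (Real.sqrt (∑ b, X b w))⁻¹ *
        ((∑ b : A, X b w) * (Real.sqrt (∑ b, X b w))⁻¹) =
        X a w * ((∑ b : A, X b w) * ((Real.sqrt (∑ b, X b w))⁻¹ *
          (Real.sqrt (∑ b, X b w))⁻¹)) := by ring
    rw [this, hgg, mul_inv_cancel₀ hne, mul_one]
  rw [Finset.sum_congr rfl (fun w _ => key w)]
  exact aux_rowsum X h01 hrow a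

lemma aux_comm {n : Type*} [Fintype n] [DecidableEq n]
    (P Q : Matrix n n ℝ) (hP2 : P * P = P) (hQ2 : Q * Q = Q)
    (hU2 : ((2 • P - 1) * (2 • Q - 1)) ^ 2 = 1) : P * Q = Q * P := by
  set R := 2 • P - 1 with hRdef
  set S := 2 • Q - 1 with hSdef
  have hR : R * R = 1 := by
    have e : R * R = 4 • (P * P) - 4 • P + 1 := by rw [hRdef]; noncomm_ring
    rw [e, hP2]
    abel
  have hS : S * S = 1 := by
    have e : S * S = 4 • (Q * Q) - 4 • Q + 1 := by rw [hSdef]; noncomm_ring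
    rw [e, hQ2]
    abel
  have h1 : R * S * (R * S) = 1 := by rw [← sq]; exact hU2
  have hSR : S * R = R * S := by
    have e : R * (R * S * (R * S)) * S = (R * R) * (S * R) * (S * S) := by
      noncomm_ring
    rw [h1, hR, hS, one_mul, mul_one, mul_one] at e
    exact e.symm
  have expand1 : S * R = 4 • (Q * P) - 2 • Q - 2 • P + 1 := by
    rw [hRdef, hSdef]; noncomm_ring
  have expand2 : R * S = 4 • (P * Q) - 2 • P - 2 • Q + 1 := by
    rw [hRdef, hSdef]; noncomm_ring
  rw [expand1, expand2] at hSR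
  have h4 : (4:ℕ) • (Q * P) = (4:ℕ) • (P * Q) := by
    have := hSR
    abel_nf at this ⊢
    linear_combination (norm := abel_nf) this
  have : ((4:ℕ):ℝ) • (Q * P) = ((4:ℕ):ℝ) • (P * Q) := by
    rw [Nat.cast_smul_eq_nsmul, Nat.cast_smul_eq_nsmul]; exact h4
  have := smul_right_injective (Matrix n n ℝ) (by norm_num : ((4:ℕ):ℝ) ≠ 0) this
  exact this.symm


theorem stmt_16 (A 𝒱 ℱ : Type*) [Fintype A] [Fintype 𝒱] [Fintype ℱ]
    [DecidableEq A] [DecidableEq 𝒱] [DecidableEq ℱ]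
    [Nonempty A] [Nonempty 𝒱] [Nonempty ℱ]
    (N : Matrix A 𝒱 ℝ) (M : Matrix A ℱ ℝ)
    (hN01 : ∀ a w, N a w = 0 ∨ N a w = 1)
    (hNrow : ∀ a : A, ∃! w : 𝒱, N a w = 1)
    (hNcol : ∀ w : 𝒱, 0 < ∑ a : A, N a w)
    (hM01 : ∀ a f, M a f = 0 ∨ M a f = 1)
    (hMrow : ∀ a : A, ∃! f : ℱ, M a f = 1)
    (hMcol : ∀ f : ℱ, 0 < ∑ a : A, M a f)
    (Nhat : Matrix A 𝒱 ℝ)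
    (hNhat : Nhat = N * Matrix.diagonal (fun w => (Real.sqrt ((Nᵀ * N) w w))⁻¹))
    (Mhat : Matrix A ℱ ℝ)
    (hMhat : Mhat = M * Matrix.diagonal (fun f => (Real.sqrt ((Mᵀ * M) f f))⁻¹))
    (Q P U : Matrix A A ℝ)
    (hQ : Q = Nhat * Nhatᵀ) (hP : P = Mhat * Mhatᵀ)
    (hU : U = (2 • P - 1) * (2 • Q - 1))
    (hinter : ∀ x : A → ℝ,
      ((∃ y : A → ℝ, P *ᵥ y = x) ∧ (∃ z : A → ℝ, Q *ᵥ z = x)) ↔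
        ∃ c : ℝ, x = fun _ => c)
    (hU2 : U ^ 2 = 1)
    (u v : 𝒱) (huv : u ≠ v) (d : ℕ) (hd : 0 < d)
    (hNu : ∑ a : A, N a u = d) (hNv : ∑ a : A, N a v = d) :
    U *ᵥ (Nhat *ᵥ Pi.single u 1) = Nhat *ᵥ Pi.single v 1 ↔
      ∀ w : 𝒱, w = u ∨ w = v := by
  -- basic scalars
  have hd' : (0:ℝ) < (d:ℝ) := by exact_mod_cast hd
  have sqd_pos : 0 < Real.sqrt d := Real.sqrt_pos.mpr hd'
  have sqd_ne : Real.sqrt d ≠ 0 := ne_of_gt sqd_pos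
  have hsqd : Real.sqrt d * Real.sqrt d = (d:ℝ) := Real.mul_self_sqrt hd'.le
  have hdu : (Nᵀ * N) u u = (d:ℝ) := by rw [aux_diag N hN01 u, hNu]
  have hdv : (Nᵀ * N) v v = (d:ℝ) := by rw [aux_diag N hN01 v, hNv]
  set xu := Nhat *ᵥ Pi.single u 1 with hxudef
  set xv := Nhat *ᵥ Pi.single v 1 with hxvdef
  have hxu : ∀ a, xu a = N a u * (Real.sqrt d)⁻¹ := by
    intro a
    rw [hxudef, hNhat]
    simp only [Matrix.mulVec, dotProduct, Matrix.mul_diagonal, Pi.single_apply]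
    rw [Finset.sum_eq_single u]
    · rw [if_pos rfl, hdu, mul_one]
    · intro w _ hne
      rw [if_neg hne, mul_zero]
    · simp
  have hxv : ∀ a, xv a = N a v * (Real.sqrt d)⁻¹ := by
    intro a
    rw [hxvdef, hNhat]
    simp only [Matrix.mulVec, dotProduct, Matrix.mul_diagonal, Pi.single_apply]
    rw [Finset.sum_eq_single v]
    · rw [if_pos rfl, hdv, mul_one]
    · intro w _ hne
      rw [if_neg hne, mul_zero]
    · simp
  -- orthonormality
  have hNN1 : Nhatᵀ * Nhat = 1 := by
    rw [hNhat]; exact aux_hat_orth N hN01 hNrow hNcol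
  have hMM1 : Mhatᵀ * Mhat = 1 := by
    rw [hMhat]; exact aux_hat_orth M hM01 hMrow hMcol
  have hQN : Q * Nhat = Nhat := by
    rw [hQ, Matrix.mul_assoc, hNN1, Matrix.mul_one]
  have hQxu : Q *ᵥ xu = xu := by
    rw [hxudef, Matrix.mulVec_mulVec, hQN]
  have hP2 : P * P = P := by
    rw [hP, Matrix.mul_assoc, ← Matrix.mul_assoc Mhatᵀ, hMM1, Matrix.one_mul]
  have hQ2 : Q * Q = Q := by
    rw [hQ, Matrix.mul_assoc, ← Matrix.mul_assoc Nhatᵀ, hNN1, Matrix.one_mul]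
  have hPsym : Pᵀ = P := by
    rw [hP, Matrix.transpose_mul, Matrix.transpose_transpose]
  have hPQ : P * Q = Q * P := by
    apply aux_comm P Q hP2 hQ2
    rw [← hU]; exact hU2
  -- P maps ones to ones
  have hP1 : P *ᵥ (fun _ => (1:ℝ)) = fun _ => 1 := by
    rw [hP, hMhat]; exact aux_hat_one M hM01 hMrow hMcol
  have hPcolsum : ∀ b, ∑ a, P a b = 1 := by
    intro b
    have h := congrFun hP1 b
    simp only [Matrix.mulVec, dotProduct, mul_one] at h
    calc ∑ a, P a b = ∑ a, P b a := by
          apply Finset.sum_congr rfl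
          intro a _
          have ht := congrFun (congrFun hPsym a) b
          rw [Matrix.transpose_apply] at ht
          exact ht.symm
      _ = 1 := h
  -- P xu is constant
  have hPc : ∃ c, P *ᵥ xu = fun _ => c := by
    apply (hinter (P *ᵥ xu)).mp
    refine ⟨⟨xu, rfl⟩, ⟨P *ᵥ xu, ?_⟩⟩
    rw [Matrix.mulVec_mulVec, ← hPQ, ← Matrix.mulVec_mulVec, hQxu]
  obtain ⟨c, hc⟩ := hPc
  have hsum_xu : ∑ a, xu a = Real.sqrt d := by
    rw [Finset.sum_congr rfl (fun a _ => hxu a), ← Finset.sum_mul, hNu]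
    rw [← hsqd]
    field_simp
    rw [Real.sqrt_sq sqd_pos.le]
  have hcsum : c * (Fintype.card A : ℝ) = Real.sqrt d := by
    have hsum : ∑ a, (P *ᵥ xu) a = ∑ a, xu a := by
      simp only [Matrix.mulVec, dotProduct]
      rw [Finset.sum_comm]
      apply Finset.sum_congr rfl
      intro b _
      rw [← Finset.sum_mul, hPcolsum b, one_mul]
    rw [hc, hsum_xu] at hsum
    simpa [Finset.sum_const, nsmul_eq_mul, mul_comm] using hsum
  have cardA_pos : (0:ℝ) < (Fintype.card A : ℝ) := by
    exact_mod_cast Fintype.card_pos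
  -- U xu computation
  have hSxu : (2 • Q - 1) *ᵥ xu = xu := by
    rw [Matrix.sub_mulVec, Matrix.one_mulVec, Matrix.smul_mulVec, hQxu,
      two_nsmul, add_sub_cancel_right]
  have hUxu : U *ᵥ xu = fun a => 2 * c - xu a := by
    rw [hU, ← Matrix.mulVec_mulVec, hSxu, Matrix.sub_mulVec, Matrix.one_mulVec,
      Matrix.smul_mulVec, hc]
    funext a
    simp [Pi.sub_apply]
  rw [hUxu]
  constructor
  · intro h w
    obtain ⟨a, ha⟩ : ∃ a, N a w = 1 := by
      by_contra hcon
      push_neg at hcon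
      have hz : ∑ a, N a w = 0 :=
        Finset.sum_eq_zero (fun a _ => (hN01 a w).resolve_right (hcon a))
      have := hNcol w
      rw [hz] at this
      exact lt_irrefl 0 this
    have hcpos : 0 < c := by nlinarith [hcsum, sqd_pos, cardA_pos]
    by_contra hcon
    push_neg at hcon
    have hu0 : N a u = 0 := by
      rcases hN01 a u with h0 | h1
      · exact h0
      · obtain ⟨w0, _, huniq⟩ := hNrow a
        exact absurd ((huniq w ha).trans (huniq u h1).symm) hcon.1
    have hv0 : N a v = 0 := by
      rcases hN01 a v with h0 | h1
      · exact h0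
      · obtain ⟨w0, _, huniq⟩ := hNrow a
        exact absurd ((huniq w ha).trans (huniq v h1).symm) hcon.2
    have ha' := congrFun h a
    rw [hxu a, hxv a, hu0, hv0] at ha'
    simp at ha'
    linarith
  · intro h
    have hNauv : ∀ a, N a u + N a v = 1 := by
      intro a
      obtain ⟨w0, hw0, huniq⟩ := hNrow a
      rcases h w0 with rfl | rfl
      · have hv0 : N a v = 0 := by
          rcases hN01 a v with h0 | h1
          · exact h0
          · exact absurd (huniq v h1) (Ne.symm huv)
        rw [hw0, hv0, add_zero]
      · have hu0 : N a u = 0 := by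
          rcases hN01 a u with h0 | h1
          · exact h0
          · exact absurd (huniq u h1) huv
        rw [hw0, hu0, zero_add]
    have hcard : (Fintype.card A : ℝ) = 2 * (d:ℝ) := by
      have hsum : ∑ a : A, (1:ℝ) = ∑ a : A, (N a u + N a v) := by
        apply Finset.sum_congr rfl
        intro a _
        rw [hNauv a]
      rw [Finset.sum_add_distrib, hNu, hNv] at hsum
      simpa [Finset.sum_const, nsmul_eq_mul, two_mul] using hsum
    have h2c : 2 * c = (Real.sqrt d)⁻¹ := by
      rw [hcard] at hcsum
      have key : (2 * c) * Real.sqrt d = 1 := by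
        have e : (2 * c) * Real.sqrt d * Real.sqrt d = 1 * Real.sqrt d := by
          rw [mul_assoc, hsqd, one_mul]
          linear_combination hcsum
        exact mul_right_cancel₀ sqd_ne e
      exact eq_inv_of_mul_eq_one_left key
    funext a
    rw [hxu a, hxv a, h2c]
    have hv1 : N a v = 1 - N a u := by linarith [hNauv a]
    rw [hv1]
    ring
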